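/- Let λ > 2 and s ∈ ℂ. Define the operators L and K on pairs (f₁, f₂) of functions ℝ → ℂ by L(f₁, f₂) = (τ_s(g₂)f₁ + τ_s(g₁⁻¹)f₁ + τ_s(g₂)f₂, τ_s(g₃)f₁ + τ_s(g₁)f₂ + τ_s(g₃)f₂) and K(f₁, f₂) = (τ_s(J)f₂, τ_s(J)f₁), where (τ_s(J)f)(x) = f(−x). Then K ∘ L = L ∘ K: for each of the two components, the resulting functions agree at every real x at which all the occurring Möbius denominators are nonzero. (This is the J-symmetry of the transfer operator which leads to the factorization of the Selberg zeta function.) -/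
import Mathlib


open Matrix

/-- The weighted composition operator `τ_s(g)` attached to a real 2×2 matrix `g` of
determinant `±1`: `(τ_s(g)f)(x) = ((c'x+d')⁻²)^s · f((a'x+b')/(c'x+d'))`, where
`!![a',b';c',d'] = g⁻¹` and the power is the principal complex power. -/
noncomputable def tauOp (s : ℂ) (g : Matrix (Fin 2) (Fin 2) ℝ) (f : ℝ → ℂ) (x : ℝ) : ℂ :=
  ((((g⁻¹ 1 0 * x + g⁻¹ 1 1) ^ (-2 : ℤ) : ℝ) : ℂ) ^ s) *
    f ((g⁻¹ 0 0 * x + g⁻¹ 0 1) / (g⁻¹ 1 0 * x + g⁻¹ 1 1))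

/-- The finite-term transfer operator `𝓛_{R,s}` of the reduced discretization:
`L(f₁,f₂) = (τ_s(g₂)f₁ + τ_s(g₁⁻¹)f₁ + τ_s(g₂)f₂, τ_s(g₃)f₁ + τ_s(g₁)f₂ + τ_s(g₃)f₂)`,
where `g₁ = !![1,λ;0,1]`, `g₂ = !![λ,1;-1,0]`, `g₃ = !![λ,-1;1,0]`. -/
noncomputable def Lop (lam : ℝ) (s : ℂ) (f : (ℝ → ℂ) × (ℝ → ℂ)) : (ℝ → ℂ) × (ℝ → ℂ) :=
  (fun x => tauOp s !![lam, 1; -1, 0] f.1 x + tauOp s (!![1, lam; 0, 1])⁻¹ f.1 x +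
      tauOp s !![lam, 1; -1, 0] f.2 x,
   fun x => tauOp s !![lam, -1; 1, 0] f.1 x + tauOp s !![1, lam; 0, 1] f.2 x +
      tauOp s !![lam, -1; 1, 0] f.2 x)

/-- The symmetry operator `K(f₁,f₂) = (τ_s(J)f₂, τ_s(J)f₁)`, where
`(τ_s(J)f)(x) = f(−x)`. -/
def Kop (f : (ℝ → ℂ) × (ℝ → ℂ)) : (ℝ → ℂ) × (ℝ → ℂ) :=
  (fun x => f.2 (-x), fun x => f.1 (-x))

lemma inv_g1 (lam : ℝ) : (!![1, lam; 0, 1] : Matrix (Fin 2) (Fin 2) ℝ)⁻¹ = !![1, -lam; 0, 1] :=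
  Matrix.inv_eq_right_inv (by
    rw [Matrix.mul_fin_two, Matrix.one_fin_two]; norm_num)

lemma inv_g2 (lam : ℝ) : (!![lam, 1; -1, 0] : Matrix (Fin 2) (Fin 2) ℝ)⁻¹ = !![0, -1; 1, lam] :=
  Matrix.inv_eq_right_inv (by
    rw [Matrix.mul_fin_two, Matrix.one_fin_two]; norm_num)

lemma inv_g3 (lam : ℝ) : (!![lam, -1; 1, 0] : Matrix (Fin 2) (Fin 2) ℝ)⁻¹ = !![0, 1; -1, lam] :=
  Matrix.inv_eq_right_inv (by
    rw [Matrix.mul_fin_two, Matrix.one_fin_two]; norm_num)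

/-- The `J`-symmetry of the transfer operator: `K ∘ L = L ∘ K`, both
components agreeing at every real `x` at which all the occurring Möbius denominators are
nonzero. -/
theorem transfer_operator_J_symmetry
    (lam : ℝ) (hlam : 2 < lam) (s : ℂ) (f₁ f₂ : ℝ → ℂ) (x : ℝ)
    (hden : ∀ M ∈ ({!![1, lam; 0, 1], (!![1, lam; 0, 1])⁻¹, !![lam, 1; -1, 0],
        !![lam, -1; 1, 0]} : Set (Matrix (Fin 2) (Fin 2) ℝ)),
      ∀ y : ℝ, (y = x ∨ y = -x) → M⁻¹ 1 0 * y + M⁻¹ 1 1 ≠ 0) :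
    (Kop (Lop lam s (f₁, f₂))).1 x = (Lop lam s (Kop (f₁, f₂))).1 x ∧
    (Kop (Lop lam s (f₁, f₂))).2 x = (Lop lam s (Kop (f₁, f₂))).2 x := by
  simp only [Kop, Lop, tauOp, inv_g1, inv_g2, inv_g3, neg_neg]
  norm_num [Matrix.cons_val_zero, Matrix.cons_val_one, Matrix.head_cons]
  have b1 : -(-1 / (x + lam)) = (x + lam)⁻¹ := by
    rw [neg_div, neg_neg, one_div]
  have b2 : (-lam + -x : ℝ) = -x + -lam := by ring
  have b3 : (-1 : ℝ) / (-x + lam) = -(-x + lam)⁻¹ := by rw [neg_div, one_div]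
  have b4 : (lam + -x : ℝ) = -x + lam := by ring
  constructor
  · rw [b1, b2]; ring
  · rw [b3, b4]; ring
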